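/- Assume that for ℓ ∈ {1,2} the measurable kernel γ_ℓ : Ω×Ω → [0,∞) satisfies condition (N) with a common constant γ∞ ≥ 1, let (u⁰,v⁰) ∈ X⁺ × X⁺, and suppose that for some δ ≥ 0 and ε > 0 one has ‖u⁰‖∞ ≤ 1 + δ and ‖v⁰‖∞ < (f+κ−ε)/(1+δ). Then the global solution (u,v) of (CNLGS) satisfies the exponential decay estimate ‖v(t)‖∞ ≤ e^{−εt} ‖v⁰‖∞ for all t ≥ 0. -/

import Mathlib

open MeasureTheory Real Set Filter

noncomputable section

/-- The nonlocal operator `Γ_γ z(x) = ∫_Ω γ(x,y)(z(y) - z(x)) dy`. -/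
def GammaOp {n : ℕ} (Ω : Set (EuclideanSpace ℝ (Fin n)))
    (γ : EuclideanSpace ℝ (Fin n) → EuclideanSpace ℝ (Fin n) → ℝ)
    (z : EuclideanSpace ℝ (Fin n) → ℝ) (x : EuclideanSpace ℝ (Fin n)) : ℝ :=
  ∫ y in Ω, γ x y * (z y - z x)

/-- Condition (N): γ is a measurable nonnegative kernel with
`∫_Ω γ(y,x) dy = ∫_Ω γ(x,y) dy ≤ γ∞` for all `x ∈ Ω`. -/
def KernelCondN {n : ℕ} (Ω : Set (EuclideanSpace ℝ (Fin n)))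
    (γ : EuclideanSpace ℝ (Fin n) → EuclideanSpace ℝ (Fin n) → ℝ) (γinf : ℝ) : Prop :=
  Measurable (Function.uncurry γ) ∧ (∀ x y, 0 ≤ γ x y) ∧
    ∀ x ∈ Ω, IntegrableOn (fun y => γ x y) Ω ∧ IntegrableOn (fun y => γ y x) Ω ∧
      (∫ y in Ω, γ y x) = (∫ y in Ω, γ x y) ∧ (∫ y in Ω, γ x y) ≤ γinf

/-- The `L∞(Ω)` norm. -/
def supN {n : ℕ} (Ω : Set (EuclideanSpace ℝ (Fin n)))
    (z : EuclideanSpace ℝ (Fin n) → ℝ) : ℝ :=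
  (eLpNormEssSup z (volume.restrict Ω)).toReal

/-- `(u,v)` is a (C¹ in time, L∞ in space) solution of the nonlocal Gray-Scott system
(CNLGS) with kernels `γ₁, γ₂` and initial data `(u0, v0)`. -/
def IsGSSol {n : ℕ} (Ω : Set (EuclideanSpace ℝ (Fin n))) (d₁ d₂ f κ : ℝ)
    (γ₁ γ₂ : EuclideanSpace ℝ (Fin n) → EuclideanSpace ℝ (Fin n) → ℝ)
    (u0 v0 : EuclideanSpace ℝ (Fin n) → ℝ)
    (u v : ℝ → EuclideanSpace ℝ (Fin n) → ℝ) : Prop :=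
  (∀ t, 0 ≤ t → MemLp (u t) ⊤ (volume.restrict Ω) ∧ MemLp (v t) ⊤ (volume.restrict Ω)) ∧
  (∀ x ∈ Ω, u 0 x = u0 x ∧ v 0 x = v0 x) ∧
  (∀ x ∈ Ω, ∀ t, 0 ≤ t →
    HasDerivWithinAt (fun s => u s x)
      (d₁ * GammaOp Ω γ₁ (u t) x - u t x * (v t x) ^ 2 + f * (1 - u t x)) (Ici 0) t ∧
    HasDerivWithinAt (fun s => v s x)
      (d₂ * GammaOp Ω γ₂ (v t) x + u t x * (v t x) ^ 2 - (f + κ) * v t x) (Ici 0) t)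

/-- A time-dependent function is nonnegative a.e. in `Ω` at each time `t ≥ 0`. -/
def NonnegSol {n : ℕ} (Ω : Set (EuclideanSpace ℝ (Fin n)))
    (w : ℝ → EuclideanSpace ℝ (Fin n) → ℝ) : Prop :=
  ∀ t, 0 ≤ t → ∀ᵐ x ∂(volume.restrict Ω), 0 ≤ w t x

noncomputable section

private lemma cmp_aux {f fd : ℝ → ℝ} {a b M : ℝ}
    (hf : ContinuousOn f (Set.Icc a b))
    (hf' : ∀ s ∈ Set.Ico a b, HasDerivWithinAt f (fd s) (Set.Ici s) s)
    (hM : ∀ s ∈ Set.Ico a b, fd s ≤ M) :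
    ∀ t ∈ Set.Icc a b, f t ≤ f a + M * (t - a) := by
  have hB : ∀ s : ℝ, HasDerivWithinAt (fun r => f a + M * (r - a)) M (Set.Ici s) s := by
    intro s
    have h1 : HasDerivAt (fun r => f a + M * (r - a)) (M * 1) s :=
      (((hasDerivAt_id s).sub_const a).const_mul M).const_add (f a)
    simpa using h1.hasDerivWithinAt
  have hBc : ContinuousOn (fun r => f a + M * (r - a)) (Set.Icc a b) :=
    (continuous_const.add (continuous_const.mul (continuous_id.sub continuous_const))).continuousOn
  intro t ht
  exact image_le_of_deriv_right_le_deriv_boundary hf hf' (by simp) hBc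
    (fun s _ => hB s) hM ht

private lemma ge_of_rat {g : ℝ → ℝ} {t : ℝ} (ht : 0 ≤ t)
    (hg : ContinuousWithinAt g (Set.Ici 0) t)
    (h : ∀ q : ℚ, 0 ≤ (q : ℝ) → 0 ≤ g q) : 0 ≤ g t := by
  have hex : ∀ k : ℕ, ∃ q : ℚ, t < (q : ℝ) ∧ (q : ℝ) < t + 1 / (k + 1) := by
    intro k
    refine exists_rat_btwn ?_
    have h1 : (0:ℝ) < 1 / ((k:ℝ) + 1) := by positivity
    linarith
  choose s hs1 hs2 using hex
  have htend : Tendsto (fun k : ℕ => ((s k : ℝ))) atTop (nhds t) := by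
    have h1 : Tendsto (fun k : ℕ => t + 1 / ((k : ℝ) + 1)) atTop (nhds (t + 0)) :=
      tendsto_const_nhds.add tendsto_one_div_add_atTop_nhds_zero_nat
    rw [add_zero] at h1
    exact tendsto_of_tendsto_of_tendsto_of_le_of_le tendsto_const_nhds h1
      (fun k => (hs1 k).le) (fun k => (hs2 k).le)
  have htend' : Tendsto (fun k : ℕ => ((s k : ℝ))) atTop (nhdsWithin t (Set.Ici 0)) := by
    refine tendsto_nhdsWithin_of_tendsto_nhds_of_eventually_within _ htend ?_
    exact Filter.Eventually.of_forall fun k => le_trans ht (hs1 k).le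
  have hgt : Tendsto (fun k : ℕ => g (s k)) atTop (nhds (g t)) := hg.tendsto.comp htend'
  exact ge_of_tendsto' hgt fun k => h (s k) (le_trans ht (hs1 k).le)

private lemma last_crossing {g : ℝ → ℝ} {a b L : ℝ} (hab : a < b)
    (hg : ContinuousOn g (Set.Icc a b)) (ha : g a ≤ L) (hb : L < g b) :
    ∃ τ ∈ Set.Ico a b, g τ = L ∧ ∀ s ∈ Set.Ioc τ b, L < g s := by
  set S : Set ℝ := Set.Icc a b ∩ g ⁻¹' (Set.Iic L) with hS
  have hSne : S.Nonempty := ⟨a, ⟨le_refl a, hab.le⟩, ha⟩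
  have hSclosed : IsClosed S := hg.preimage_isClosed_of_isClosed isClosed_Icc isClosed_Iic
  have hScomp : IsCompact S :=
    IsCompact.of_isClosed_subset isCompact_Icc hSclosed Set.inter_subset_left
  set τ := sSup S with hτdef
  have hτS : τ ∈ S := hScomp.sSup_mem hSne
  have hτa : a ≤ τ := hτS.1.1
  have hτb : τ ≤ b := hτS.1.2
  have hup : ∀ s ∈ Set.Ioc τ b, L < g s := by
    intro s hs
    by_contra hc
    push_neg at hc
    have : s ∈ S := ⟨⟨le_trans hτa hs.1.le, hs.2⟩, hc⟩
    exact absurd (le_csSup hScomp.bddAbove this) (not_le.mpr hs.1)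
  have hτltb : τ < b := by
    rcases lt_or_eq_of_le hτb with h | h
    · exact h
    · exact absurd (h ▸ hτS.2 : g b ≤ L) (not_le.mpr hb)
  have hgτ : g τ = L := by
    refine le_antisymm hτS.2 ?_
    -- approach τ from the right
    have hex : ∀ k : ℕ, ∃ r : ℝ, τ < r ∧ r < min b (τ + 1 / (k + 1)) := by
      intro k
      have h1 : (0:ℝ) < 1 / ((k:ℝ) + 1) := by positivity
      refine exists_between (lt_min hτltb (by linarith))
    choose s hs1 hs2 using hex
    have htend : Tendsto s atTop (nhds τ) := by
      have h1 : Tendsto (fun k : ℕ => τ + 1 / ((k : ℝ) + 1)) atTop (nhds (τ + 0)) :=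
        tendsto_const_nhds.add tendsto_one_div_add_atTop_nhds_zero_nat
      rw [add_zero] at h1
      exact tendsto_of_tendsto_of_tendsto_of_le_of_le tendsto_const_nhds h1
        (fun k => (hs1 k).le) (fun k => le_trans (hs2 k).le (min_le_right _ _))
    have hmem : ∀ k, s k ∈ Set.Icc a b :=
      fun k => ⟨le_trans hτa (hs1 k).le, le_trans (hs2 k).le (min_le_left _ _)⟩
    have htend' : Tendsto s atTop (nhdsWithin τ (Set.Icc a b)) :=
      tendsto_nhdsWithin_of_tendsto_nhds_of_eventually_within _ htend
        (Filter.Eventually.of_forall hmem)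
    have hgt : Tendsto (fun k => g (s k)) atTop (nhds (g τ)) :=
      ((hg.continuousWithinAt ⟨hτa, hτb⟩).tendsto).comp htend'
    refine ge_of_tendsto' hgt fun k => ?_
    exact (hup (s k) ⟨hs1 k, (hmem k).2⟩).le
  exact ⟨τ, ⟨hτa, hτltb⟩, hgτ, hup⟩

end

private lemma supN_nonneg {n : ℕ} (Ω : Set (EuclideanSpace ℝ (Fin n)))
    (z : EuclideanSpace ℝ (Fin n) → ℝ) : 0 ≤ supN Ω z := ENNReal.toReal_nonneg

private lemma abs_ae_le_supN {n : ℕ} (Ω : Set (EuclideanSpace ℝ (Fin n)))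
    (z : EuclideanSpace ℝ (Fin n) → ℝ) (h : MemLp z ⊤ (volume.restrict Ω)) :
    ∀ᵐ x ∂(volume.restrict Ω), |z x| ≤ supN Ω z := by
  have h2 := h.2
  rw [eLpNorm_exponent_top] at h2
  filter_upwards [ae_le_eLpNormEssSup (f := z) (μ := volume.restrict Ω)] with x hx
  have h3 : ((‖z x‖₊ : ENNReal)).toReal ≤ (eLpNormEssSup z (volume.restrict Ω)).toReal :=
    ENNReal.toReal_mono h2.ne hx
  simpa [Real.norm_eq_abs, supN] using h3

private lemma supN_le_of_ae {n : ℕ} {Ω : Set (EuclideanSpace ℝ (Fin n))}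
    {z : EuclideanSpace ℝ (Fin n) → ℝ} {C : ℝ} (hC : 0 ≤ C)
    (h : ∀ᵐ x ∂(volume.restrict Ω), |z x| ≤ C) : supN Ω z ≤ C := by
  have h1 : eLpNormEssSup z (volume.restrict Ω) ≤ ENNReal.ofReal C := by
    refine eLpNormEssSup_le_of_ae_bound ?_
    simpa [Real.norm_eq_abs] using h
  calc supN Ω z ≤ (ENNReal.ofReal C).toReal := ENNReal.toReal_mono ENNReal.ofReal_ne_top h1
    _ = C := ENNReal.toReal_ofReal hC

section gamma

variable {n : ℕ} {Ω : Set (EuclideanSpace ℝ (Fin n))}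
  {γ : EuclideanSpace ℝ (Fin n) → EuclideanSpace ℝ (Fin n) → ℝ} {γinf : ℝ}
  {z : EuclideanSpace ℝ (Fin n) → ℝ} {x : EuclideanSpace ℝ (Fin n)}

private lemma gamma_int (hγ : KernelCondN Ω γ γinf)
    (hz : MemLp z ⊤ (volume.restrict Ω)) (hx : x ∈ Ω) :
    IntegrableOn (fun y => γ x y * z y) Ω := by
  obtain ⟨hm, hpos, hint⟩ := hγ
  refine Integrable.mono' (((hint x hx).1).mul_const (supN Ω z)) ?_ ?_
  · exact (Measurable.of_uncurry_left hm).aestronglyMeasurable.mul hz.1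
  · filter_upwards [abs_ae_le_supN Ω z hz] with y hy
    rw [Real.norm_eq_abs, abs_mul, abs_of_nonneg (hpos x y)]
    exact mul_le_mul_of_nonneg_left hy (hpos x y)

private lemma gammaOp_eq (hγ : KernelCondN Ω γ γinf)
    (hz : MemLp z ⊤ (volume.restrict Ω)) (hx : x ∈ Ω) :
    GammaOp Ω γ z x = (∫ y in Ω, γ x y * z y) - (∫ y in Ω, γ x y) * z x := by
  have h1 := gamma_int hγ hz hx
  have h2 : IntegrableOn (fun y => γ x y * z x) Ω := ((hγ.2.2 x hx).1).mul_const (z x)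
  have : GammaOp Ω γ z x = ∫ y in Ω, (γ x y * z y - γ x y * z x) := by
    unfold GammaOp; congr 1; ext y; ring
  rw [this, integral_sub h1 h2, integral_mul_const]

private lemma gammaOp_le (hγ : KernelCondN Ω γ γinf)
    (hz : MemLp z ⊤ (volume.restrict Ω)) (hx : x ∈ Ω) {C : ℝ}
    (hC : ∀ᵐ y ∂(volume.restrict Ω), z y ≤ C) :
    GammaOp Ω γ z x ≤ (∫ y in Ω, γ x y) * (C - z x) := by
  have h1 : (∫ y in Ω, γ x y * z y) ≤ (∫ y in Ω, γ x y * C) := by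
    refine integral_mono_ae (gamma_int hγ hz hx) (((hγ.2.2 x hx).1).mul_const C) ?_
    filter_upwards [hC] with y hy
    exact mul_le_mul_of_nonneg_left hy (hγ.2.1 x y)
  rw [gammaOp_eq hγ hz hx]
  rw [integral_mul_const] at h1
  nlinarith [h1]

private lemma gammaOp_ge (hγ : KernelCondN Ω γ γinf)
    (hz : MemLp z ⊤ (volume.restrict Ω)) (hx : x ∈ Ω)
    (hnn : ∀ᵐ y ∂(volume.restrict Ω), 0 ≤ z y) :
    -((∫ y in Ω, γ x y) * z x) ≤ GammaOp Ω γ z x := by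
  have h1 : 0 ≤ ∫ y in Ω, γ x y * z y := by
    refine integral_nonneg_of_ae ?_
    filter_upwards [hnn] with y hy
    exact mul_nonneg (hγ.2.1 x y) hy
  rw [gammaOp_eq hγ hz hx]
  linarith

private lemma gamma_c_nonneg (hγ : KernelCondN Ω γ γinf) : 0 ≤ ∫ y in Ω, γ x y :=
  integral_nonneg fun y => hγ.2.1 x y

end gamma

set_option maxHeartbeats 4000000 in
/-- proof of Theorem 1.2, exponential decay of `v`: under the
strengthened smallness condition, `‖v(t)‖_∞ ≤ e^{−εt} ‖v⁰‖_∞` for all `t ≥ 0`. -/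
theorem statement7
    (n : ℕ) (hn : 1 ≤ n)
    (Ω : Set (EuclideanSpace ℝ (Fin n)))
    (hΩopen : IsOpen Ω) (hΩconn : IsConnected Ω) (hΩbdd : Bornology.IsBounded Ω)
    (d₁ d₂ f κ : ℝ) (hd₁ : 0 < d₁) (hd₂ : 0 < d₂) (hf : 0 < f) (hκ : 0 < κ)
    (γ₁ γ₂ : EuclideanSpace ℝ (Fin n) → EuclideanSpace ℝ (Fin n) → ℝ)
    (γinf : ℝ) (hγinf : 1 ≤ γinf)
    (hγ₁ : KernelCondN Ω γ₁ γinf) (hγ₂ : KernelCondN Ω γ₂ γinf)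
    (u0 v0 : EuclideanSpace ℝ (Fin n) → ℝ)
    (hu0 : MemLp u0 ⊤ (volume.restrict Ω)) (hv0 : MemLp v0 ⊤ (volume.restrict Ω))
    (hu0pos : ∀ᵐ x ∂(volume.restrict Ω), 0 ≤ u0 x)
    (hv0pos : ∀ᵐ x ∂(volume.restrict Ω), 0 ≤ v0 x)
    (u v : ℝ → EuclideanSpace ℝ (Fin n) → ℝ)
    (hsol : IsGSSol Ω d₁ d₂ f κ γ₁ γ₂ u0 v0 u v)
    (hupos : NonnegSol Ω u) (hvpos : NonnegSol Ω v)
    (δ ε : ℝ) (hδ : 0 ≤ δ) (hε : 0 < ε)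
    (hu0small : supN Ω u0 ≤ 1 + δ) (hv0small : supN Ω v0 < (f + κ - ε) / (1 + δ)) :
    ∀ t, 0 ≤ t → supN Ω (v t) ≤ Real.exp (-ε * t) * supN Ω v0 := by
  obtain ⟨hmem, hinit, hode⟩ := hsol
  have hΩm : MeasurableSet Ω := hΩopen.measurableSet
  intro T hT
  set N := supN Ω v0 with hNdef
  clear_value N
  have hN0 : 0 ≤ N := by rw [hNdef]; exact supN_nonneg Ω v0
  have h1δ : (0:ℝ) < 1 + δ := by linarith
  have hfke : (1 + δ) * N < f + κ - ε := by
    have := (lt_div_iff₀ h1δ).mp hv0small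
    linarith
  set ρ := (f + κ - ε - (1 + δ) * N) / 2 with hρdef
  clear_value ρ
  have hρ : 0 < ρ := by rw [hρdef]; linarith
  -- trajectory continuity
  have hcontu : ∀ x ∈ Ω, ContinuousOn (fun s => u s x) (Set.Ici 0) :=
    fun x hx t ht => ((hode x hx t ht).1).continuousWithinAt
  have hcontv : ∀ x ∈ Ω, ContinuousOn (fun s => v s x) (Set.Ici 0) :=
    fun x hx t ht => ((hode x hx t ht).2).continuousWithinAt
  -- the main per-η claim
  have main : ∀ η : ℝ, 0 < η → η ≤ min 1 (ρ / (N + δ + 2)) →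
      supN Ω (v T) ≤ (N + η) * Real.exp (-ε * T) := by
    intro η hη0 hηle
    have hη1 : η ≤ 1 := le_trans hηle (min_le_left _ _)
    have hη2 : η * (N + δ + 2) ≤ ρ := by
      have h1 : η ≤ ρ / (N + δ + 2) := le_trans hηle (min_le_right _ _)
      have h2 : (0:ℝ) < N + δ + 2 := by linarith
      calc η * (N + δ + 2) ≤ (ρ / (N + δ + 2)) * (N + δ + 2) := by
            exact mul_le_mul_of_nonneg_right h1 h2.le
        _ = ρ := by field_simp
    set φ := 1 + δ + η with hφdef
    set ψ : ℝ → ℝ := fun s => (N + η) * Real.exp (-ε * s) with hψdef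
    clear_value φ ψ
    have hφ1 : 1 ≤ φ := by rw [hφdef]; linarith
    have hφ0 : 0 ≤ φ := by linarith
    have hNη : 0 < N + η := by linarith
    have hψpt : ∀ s, ψ s = (N + η) * Real.exp (-ε * s) := fun s => by rw [hψdef]
    have hψpos : ∀ s, 0 < ψ s := fun s => by
      rw [hψpt s]; exact mul_pos hNη (Real.exp_pos _)
    have hψ0 : ψ 0 = N + η := by simp [hψdef]
    have hψmono : ∀ s, 0 ≤ s → ψ s ≤ N + η := by
      intro s hs
      have h1 : Real.exp (-ε * s) ≤ 1 := by
        rw [show (1:ℝ) = Real.exp 0 by simp]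
        exact Real.exp_le_exp.mpr (by nlinarith)
      calc ψ s = (N + η) * Real.exp (-ε * s) := hψpt s
        _ ≤ (N + η) * 1 := mul_le_mul_of_nonneg_left h1 hNη.le
        _ = N + η := mul_one _
    have hψderiv : ∀ s : ℝ, HasDerivAt ψ (-ε * ψ s) s := by
      intro s
      have h1 : HasDerivAt (fun r : ℝ => (N + η) * Real.exp (-ε * r))
          ((N + η) * (Real.exp (-ε * s) * (-ε * 1))) s :=
        (((hasDerivAt_id s).const_mul (-ε)).exp).const_mul (N + η)
      have h2 : -ε * ψ s = (N + η) * (Real.exp (-ε * s) * (-ε * 1)) := by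
        rw [hψpt s]; ring
      rw [h2, hψdef]
      exact h1
    have hkey : φ * (N + η) ≤ f + κ - ε - ρ := by
      have : φ * (N + η) = (1 + δ) * N + η * (1 + δ + N + η) := by
        rw [hφdef]; ring
      have h3 : η * (1 + δ + N + η) ≤ η * (N + δ + 2) :=
        mul_le_mul_of_nonneg_left (by linarith) hη0.le
      have hρval : (1 + δ) * N = f + κ - ε - 2 * ρ := by rw [hρdef]; ring
      linarith only [this, h3, hη2, hρval]
    obtain ⟨Q, hQgt⟩ := exists_rat_gt T
    have hTQ : T ≤ (Q:ℝ) := hQgt.le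
    have hQ0 : (0:ℝ) ≤ (Q:ℝ) := le_trans hT hTQ
    set K := (d₁ + d₂) * γinf + f + κ with hKdef
    clear_value K
    have hK0 : 0 ≤ K := by
      have : 0 ≤ (d₁ + d₂) * γinf := mul_nonneg (by linarith) (by linarith)
      rw [hKdef]; linarith
    set C0 := Real.exp (K * Q) * (supN Ω (u Q) + supN Ω (v Q)) with hC0def
    clear_value C0
    have hC00 : 0 ≤ C0 := by
      rw [hC0def]
      exact mul_nonneg (Real.exp_pos _).le (add_nonneg (supN_nonneg _ _) (supN_nonneg _ _))
    -- good points
    set P : EuclideanSpace ℝ (Fin n) → Prop := fun x =>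
      x ∈ Ω ∧ (∀ q : ℚ, 0 ≤ (q:ℝ) → 0 ≤ u q x ∧ 0 ≤ v q x) ∧
      u 0 x ≤ 1 + δ ∧ v 0 x ≤ N ∧
      u (Q:ℝ) x + v (Q:ℝ) x ≤ supN Ω (u Q) + supN Ω (v Q) with hPdef
    have hPae : ∀ᵐ x ∂(volume.restrict Ω), P x := by
      have h1 : ∀ᵐ x ∂(volume.restrict Ω), x ∈ Ω := ae_restrict_mem hΩm
      have h2 : ∀ᵐ x ∂(volume.restrict Ω), ∀ q : ℚ, 0 ≤ (q:ℝ) → 0 ≤ u q x ∧ 0 ≤ v q x := by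
        rw [MeasureTheory.ae_all_iff]
        intro q
        by_cases hq : 0 ≤ (q:ℝ)
        · filter_upwards [hupos q hq, hvpos q hq] with x ha hb _
          exact ⟨ha, hb⟩
        · filter_upwards with x hq'
          exact absurd hq' hq
      have h3 : ∀ᵐ x ∂(volume.restrict Ω), u 0 x ≤ 1 + δ := by
        filter_upwards [h1, abs_ae_le_supN Ω u0 hu0] with x hx ha
        rw [(hinit x hx).1]
        exact le_trans (le_trans (le_abs_self _) ha) hu0small
      have h4 : ∀ᵐ x ∂(volume.restrict Ω), v 0 x ≤ N := by
        filter_upwards [h1, abs_ae_le_supN Ω v0 hv0] with x hx ha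
        rw [(hinit x hx).2, hNdef]
        exact le_trans (le_abs_self _) ha
      have h5 : ∀ᵐ x ∂(volume.restrict Ω),
          u (Q:ℝ) x + v (Q:ℝ) x ≤ supN Ω (u Q) + supN Ω (v Q) := by
        filter_upwards [abs_ae_le_supN Ω (u Q) (hmem (Q:ℝ) hQ0).1,
          abs_ae_le_supN Ω (v Q) (hmem (Q:ℝ) hQ0).2] with x ha hb
        exact add_le_add (le_trans (le_abs_self _) ha) (le_trans (le_abs_self _) hb)
      filter_upwards [h1, h2, h3, h4, h5] with x a1 a2 a3 a4 a5
      exact ⟨a1, a2, a3, a4, a5⟩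
    -- nonnegativity along trajectories
    have hunn : ∀ x, P x → ∀ t, 0 ≤ t → 0 ≤ u t x := by
      intro x hx t ht
      exact ge_of_rat ht (hcontu x hx.1 t ht) (fun q hq => (hx.2.1 q hq).1)
    have hvnn : ∀ x, P x → ∀ t, 0 ≤ t → 0 ≤ v t x := by
      intro x hx t ht
      exact ge_of_rat ht (hcontv x hx.1 t ht) (fun q hq => (hx.2.1 q hq).2)
    -- a priori caps
    have hcap : ∀ x, P x → ∀ t, t ∈ Set.Icc (0:ℝ) (Q:ℝ) → u t x + v t x ≤ C0 := by
      intro x hx t ht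
      have hxΩ : x ∈ Ω := hx.1
      set DU : ℝ → ℝ := fun s =>
        d₁ * GammaOp Ω γ₁ (u s) x - u s x * (v s x) ^ 2 + f * (1 - u s x) with hDU
      set DV : ℝ → ℝ := fun s =>
        d₂ * GammaOp Ω γ₂ (v s) x + u s x * (v s x) ^ 2 - (f + κ) * v s x with hDV
      set F : ℝ → ℝ := fun r => -(Real.exp (K * r) * (u r x + v r x)) with hF
      have hFc : ContinuousOn F (Set.Icc t (Q:ℝ)) := by
        have hsub : Set.Icc t (Q:ℝ) ⊆ Set.Ici (0:ℝ) := fun s hs => le_trans ht.1 hs.1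
        exact (((Real.continuous_exp.comp (continuous_const.mul continuous_id)).continuousOn).mul
          (((hcontu x hxΩ).mono hsub).add ((hcontv x hxΩ).mono hsub))).neg
      have hF' : ∀ s ∈ Set.Ico t (Q:ℝ), HasDerivWithinAt F
          (-(Real.exp (K * s) * (K * 1) * (u s x + v s x) + Real.exp (K * s) * (DU s + DV s)))
          (Set.Ici s) s := by
        intro s hs
        have hs0 : (0:ℝ) ≤ s := le_trans ht.1 hs.1
        have huv : HasDerivWithinAt (fun r => u r x + v r x) (DU s + DV s) (Set.Ici s) s :=
          (((hode x hxΩ s hs0).1).add ((hode x hxΩ s hs0).2)).mono (Set.Ici_subset_Ici.mpr hs0)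
        have hexp : HasDerivWithinAt (fun r => Real.exp (K * r)) (Real.exp (K * s) * (K * 1))
            (Set.Ici s) s := (((hasDerivAt_id s).const_mul K).exp).hasDerivWithinAt
        exact (hexp.mul huv).neg
      have hFbd : ∀ s ∈ Set.Ico t (Q:ℝ),
          (-(Real.exp (K * s) * (K * 1) * (u s x + v s x) + Real.exp (K * s) * (DU s + DV s))) ≤ 0 := by
        intro s hs
        have hs0 : (0:ℝ) ≤ s := le_trans ht.1 hs.1
        have hu' : 0 ≤ u s x := hunn x hx s hs0
        have hv' : 0 ≤ v s x := hvnn x hx s hs0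
        have hG1 : -((∫ y in Ω, γ₁ x y) * u s x) ≤ GammaOp Ω γ₁ (u s) x := by
          refine gammaOp_ge hγ₁ (hmem s hs0).1 hxΩ ?_
          filter_upwards [hPae] with y hy
          exact hunn y hy s hs0
        have hG2 : -((∫ y in Ω, γ₂ x y) * v s x) ≤ GammaOp Ω γ₂ (v s) x := by
          refine gammaOp_ge hγ₂ (hmem s hs0).2 hxΩ ?_
          filter_upwards [hPae] with y hy
          exact hvnn y hy s hs0
        have hc1 : (∫ y in Ω, γ₁ x y) ≤ γinf := (hγ₁.2.2 x hxΩ).2.2.2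
        have hc2 : (∫ y in Ω, γ₂ x y) ≤ γinf := (hγ₂.2.2 x hxΩ).2.2.2
        have hc1' : 0 ≤ ∫ y in Ω, γ₁ x y := gamma_c_nonneg hγ₁
        have hc2' : 0 ≤ ∫ y in Ω, γ₂ x y := gamma_c_nonneg hγ₂
        have key : 0 ≤ K * (u s x + v s x) + (DU s + DV s) := by
          have e1 : -(d₁ * (γinf * u s x)) ≤ d₁ * GammaOp Ω γ₁ (u s) x := by
            have h1 : (∫ y in Ω, γ₁ x y) * u s x ≤ γinf * u s x :=
              mul_le_mul_of_nonneg_right hc1 hu'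
            have h2 := mul_le_mul_of_nonneg_left hG1 hd₁.le
            have h3 := mul_le_mul_of_nonneg_left h1 hd₁.le
            linarith only [h2, h3]
          have e2 : -(d₂ * (γinf * v s x)) ≤ d₂ * GammaOp Ω γ₂ (v s) x := by
            have h1 : (∫ y in Ω, γ₂ x y) * v s x ≤ γinf * v s x :=
              mul_le_mul_of_nonneg_right hc2 hv'
            have h2 := mul_le_mul_of_nonneg_left hG2 hd₂.le
            have h3 := mul_le_mul_of_nonneg_left h1 hd₂.le
            linarith only [h2, h3]
          have hγ0 : (0:ℝ) ≤ γinf := by linarith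
          have e3 : 0 ≤ d₂ * γinf * u s x := mul_nonneg (mul_nonneg hd₂.le hγ0) hu'
          have e4 : 0 ≤ d₁ * γinf * v s x := mul_nonneg (mul_nonneg hd₁.le hγ0) hv'
          have e5 : 0 ≤ κ * u s x := mul_nonneg hκ.le hu'
          simp only [hDU, hDV, hKdef]
          linarith only [e1, e2, e3, e4, e5, hf.le]
        have h2 : 0 ≤ Real.exp (K * s) * (K * (u s x + v s x) + (DU s + DV s)) :=
          mul_nonneg (Real.exp_pos _).le key
        linarith only [h2]
      have hcmp := cmp_aux hFc hF' hFbd (Q:ℝ) ⟨ht.2, le_refl _⟩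
      -- F Q ≤ F t + 0 * (Q - t)
      have h3 : Real.exp (K * t) * (u t x + v t x) ≤ Real.exp (K * Q) * (u (Q:ℝ) x + v (Q:ℝ) x) := by
        simp only [hF] at hcmp
        linarith only [hcmp]
      have h4 : Real.exp (K * Q) * (u (Q:ℝ) x + v (Q:ℝ) x) ≤ C0 := by
        rw [hC0def]
        exact mul_le_mul_of_nonneg_left hx.2.2.2.2 (Real.exp_pos _).le
      have h5 : u t x + v t x ≤ Real.exp (K * t) * (u t x + v t x) := by
        have h6 : 1 ≤ Real.exp (K * t) := by
          rw [show (1:ℝ) = Real.exp 0 by simp]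
          exact Real.exp_le_exp.mpr (mul_nonneg hK0 ht.1)
        have h7 := mul_le_mul_of_nonneg_right h6 (add_nonneg (hunn x hx t ht.1) (hvnn x hx t ht.1))
        linarith only [h7]
      linarith only [h3, h4, h5]
    -- constants for the window argument
    set C₅ := φ + (N + η) + C0 with hC5def
    clear_value C₅
    set C₆ := d₂ * γinf + ((N + η) + C0) * C₅ with hC6def
    clear_value C₆
    set C₇ := d₁ * γinf + C₆ + 1 with hC7def
    clear_value C₇
    have hγ0 : (0:ℝ) ≤ γinf := by linarith
    have hC50 : 0 ≤ C₅ := by rw [hC5def]; linarith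
    have hC60 : 0 ≤ C₆ := by
      have h1 : 0 ≤ ((N + η) + C0) * C₅ := mul_nonneg (by linarith) hC50
      have h2 : 0 ≤ d₂ * γinf := mul_nonneg hd₂.le hγ0
      rw [hC6def]; linarith
    have hd₁γ : 0 ≤ d₁ * γinf := mul_nonneg hd₁.le hγ0
    have hC70 : 0 < C₇ := by rw [hC7def]; linarith
    set h := 1 / (2 * C₇) with hhdef
    clear_value h
    have hh : 0 < h := by rw [hhdef]; exact one_div_pos.mpr (by linarith)
    have hC7h : C₇ * h ≤ 1 / 2 := by
      rw [hhdef, mul_one_div, div_le_div_iff₀ (by linarith) (by norm_num)]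
      linarith
    -- base case
    have hGood0 : ∀ t, t ∈ Set.Icc (0:ℝ) 0 → ∀ x, P x → u t x ≤ φ ∧ v t x ≤ ψ t := by
      intro t ht x hx
      have ht0 : t = 0 := le_antisymm ht.2 ht.1
      subst ht0
      refine ⟨le_trans hx.2.2.1 (by rw [hφdef]; linarith), ?_⟩
      rw [hψ0]
      linarith [hx.2.2.2.1]
    -- induction step
    have hstep : ∀ T₀, 0 ≤ T₀ → T₀ ≤ (Q:ℝ) →
        (∀ t, t ∈ Set.Icc (0:ℝ) T₀ → ∀ x, P x → u t x ≤ φ ∧ v t x ≤ ψ t) →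
        (∀ t, t ∈ Set.Icc (0:ℝ) (min (T₀ + h) (Q:ℝ)) → ∀ x, P x →
          u t x ≤ φ ∧ v t x ≤ ψ t) := by
      intro T₀ hT₀0 hT₀Q hGT₀
      rcases le_or_gt (min (T₀ + h) (Q:ℝ)) T₀ with hle | hlt
      · intro t ht x hx; exact hGT₀ t ⟨ht.1, le_trans ht.2 hle⟩ x hx
      set T₁ := min (T₀ + h) (Q:ℝ) with hT₁def
      clear_value T₁
      have hT₁Q : T₁ ≤ (Q:ℝ) := by rw [hT₁def]; exact min_le_right _ _
      have hT₁h : T₁ ≤ T₀ + h := by rw [hT₁def]; exact min_le_left _ _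
      have hT₁0 : (0:ℝ) ≤ T₁ := le_trans hT₀0 hlt.le
      have hwind : ∀ t, t ∈ Set.Icc T₀ T₁ → t ∈ Set.Icc (0:ℝ) (Q:ℝ) :=
        fun t ht => ⟨le_trans hT₀0 ht.1, le_trans ht.2 hT₁Q⟩
      set E : Set ℝ := insert 0 {z | ∃ t, t ∈ Set.Icc T₀ T₁ ∧ ∃ x, P x ∧
        (z = max (u t x - φ) 0 ∨ z = max (v t x - ψ t) 0)} with hEdef
      have hEbdd : ∀ z ∈ E, z ≤ C0 := by
        intro z hz
        rcases Set.mem_insert_iff.mp hz with rfl | hz2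
        · exact hC00
        · obtain ⟨t, ht, x, hx, hz3⟩ := hz2
          have hc := hcap x hx t (hwind t ht)
          have hu' := hunn x hx t (hwind t ht).1
          have hv' := hvnn x hx t (hwind t ht).1
          rcases hz3 with rfl | rfl
          · exact max_le (by linarith only [hc, hu', hv', hφ0]) hC00
          · exact max_le (by linarith only [hc, hu', hv', (hψpos t).le]) hC00
      have hEne : E.Nonempty := ⟨0, Set.mem_insert _ _⟩
      have hEbddA : BddAbove E := ⟨C0, fun z hz => hEbdd z hz⟩
      set M := sSup E with hMdef
      clear_value M
      have hM0 : 0 ≤ M := by rw [hMdef]; exact le_csSup hEbddA (Set.mem_insert _ _)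
      have hMC0 : M ≤ C0 := by rw [hMdef]; exact csSup_le hEne hEbdd
      have hmemu : ∀ t, t ∈ Set.Icc T₀ T₁ → ∀ x, P x → max (u t x - φ) 0 ≤ M := by
        intro t ht x hx
        rw [hMdef]
        exact le_csSup hEbddA (Set.mem_insert_iff.mpr (Or.inr ⟨t, ht, x, hx, Or.inl rfl⟩))
      have hmemv : ∀ t, t ∈ Set.Icc T₀ T₁ → ∀ x, P x → max (v t x - ψ t) 0 ≤ M := by
        intro t ht x hx
        rw [hMdef]
        exact le_csSup hEbddA (Set.mem_insert_iff.mpr (Or.inr ⟨t, ht, x, hx, Or.inr rfl⟩))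
      have hbu : ∀ t, t ∈ Set.Icc T₀ T₁ → ∀ x, P x → u t x ≤ φ + M := by
        intro t ht x hx
        have h1 := hmemu t ht x hx
        have h2 := le_max_left (u t x - φ) 0
        linarith only [h1, h2]
      have hbv : ∀ t, t ∈ Set.Icc T₀ T₁ → ∀ x, P x → v t x ≤ ψ t + M := by
        intro t ht x hx
        have h1 := hmemv t ht x hx
        have h2 := le_max_left (v t x - ψ t) 0
        linarith only [h1, h2]
      have haeu : ∀ s, s ∈ Set.Icc T₀ T₁ → (∀ᵐ y ∂(volume.restrict Ω), u s y ≤ φ + M) := by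
        intro s hs
        filter_upwards [hPae] with y hy
        exact hbu s hs y hy
      have haev : ∀ s, s ∈ Set.Icc T₀ T₁ → (∀ᵐ y ∂(volume.restrict Ω), v s y ≤ ψ s + M) := by
        intro s hs
        filter_upwards [hPae] with y hy
        exact hbv s hs y hy
      -- the u-excess estimate
      have hEu : ∀ t, t ∈ Set.Icc T₀ T₁ → ∀ x, P x →
          max (u t x - φ) 0 ≤ d₁ * γinf * M * h := by
        intro t ht x hx
        have hRHS0 : 0 ≤ d₁ * γinf * M * h := mul_nonneg (mul_nonneg hd₁γ hM0) hh.le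
        rcases le_or_gt (u t x) φ with hle | hgt
        · exact max_le (by linarith only [hle, hRHS0]) hRHS0
        have hT₀t : T₀ < t := by
          rcases lt_or_ge T₀ t with hc | hc
          · exact hc
          · exact absurd (hGT₀ t ⟨(hwind t ht).1, hc⟩ x hx).1 (not_le.mpr hgt)
        have hgT₀ : u T₀ x ≤ φ := (hGT₀ T₀ ⟨hT₀0, le_refl _⟩ x hx).1
        have hsub : Set.Icc T₀ t ⊆ Set.Ici (0:ℝ) := fun s hs => le_trans hT₀0 hs.1
        obtain ⟨τ, hτmem, hτeq0, hτup⟩ :=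
          last_crossing hT₀t ((hcontu x hx.1).mono hsub) hgT₀ hgt
        have hτeq : u τ x = φ := hτeq0
        have hτ0 : 0 ≤ τ := le_trans hT₀0 hτmem.1
        have hsub2 : Set.Icc τ t ⊆ Set.Ici (0:ℝ) := fun s hs => le_trans hτ0 hs.1
        have hDeriv : ∀ s ∈ Set.Ico τ t, HasDerivWithinAt (fun r => u r x)
            (d₁ * GammaOp Ω γ₁ (u s) x - u s x * (v s x) ^ 2 + f * (1 - u s x))
            (Set.Ici s) s := by
          intro s hs
          have hs0 : (0:ℝ) ≤ s := le_trans hτ0 hs.1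
          exact ((hode x hx.1 s hs0).1).mono (Set.Ici_subset_Ici.mpr hs0)
        have hDbd : ∀ s ∈ Set.Ico τ t,
            d₁ * GammaOp Ω γ₁ (u s) x - u s x * (v s x) ^ 2 + f * (1 - u s x)
            ≤ d₁ * (γinf * M) := by
          intro s hs
          have hs0 : (0:ℝ) ≤ s := le_trans hτ0 hs.1
          have hswin : s ∈ Set.Icc T₀ T₁ :=
            ⟨le_trans hτmem.1 hs.1, le_trans hs.2.le ht.2⟩
          have hsφ : φ ≤ u s x := by
            rcases eq_or_lt_of_le hs.1 with he | hlt2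
            · rw [← he, hτeq]
            · exact le_of_lt (show φ < u s x from hτup s ⟨hlt2, hs.2.le⟩)
          have hG := gammaOp_le hγ₁ (hmem s hs0).1 hx.1 (haeu s hswin)
          have hc1 : (∫ y in Ω, γ₁ x y) ≤ γinf := (hγ₁.2.2 x hx.1).2.2.2
          have hc1' : 0 ≤ ∫ y in Ω, γ₁ x y := gamma_c_nonneg hγ₁
          have h8 : (∫ y in Ω, γ₁ x y) * (φ + M - u s x) ≤ (∫ y in Ω, γ₁ x y) * M :=
            mul_le_mul_of_nonneg_left (by linarith) hc1'
          have h9 : (∫ y in Ω, γ₁ x y) * M ≤ γinf * M := mul_le_mul_of_nonneg_right hc1 hM0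
          have h10 : d₁ * GammaOp Ω γ₁ (u s) x ≤ d₁ * (γinf * M) :=
            mul_le_mul_of_nonneg_left (le_trans hG (le_trans h8 h9)) hd₁.le
          have h11 : 0 ≤ u s x * (v s x) ^ 2 := mul_nonneg (by linarith) (sq_nonneg _)
          have h12 : f * (1 - u s x) ≤ 0 :=
            mul_nonpos_of_nonneg_of_nonpos hf.le (by linarith only [hφ1, hsφ])
          linarith only [h10, h11, h12]
        have hcmp0 := cmp_aux ((hcontu x hx.1).mono hsub2) hDeriv hDbd t
          ⟨hτmem.2.le, le_refl _⟩
        have hcmp : u t x ≤ u τ x + d₁ * (γinf * M) * (t - τ) := hcmp0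
        have htτ : t - τ ≤ h := by
          have h13 : T₀ ≤ τ := hτmem.1
          have h14 : t ≤ T₁ := ht.2
          linarith only [h13, h14, hT₁h]
        have hMM0 : 0 ≤ d₁ * (γinf * M) := by
          rw [← mul_assoc]; exact mul_nonneg hd₁γ hM0
        have h15 := mul_le_mul_of_nonneg_left htτ hMM0
        refine max_le ?_ hRHS0
        rw [hτeq] at hcmp
        linarith only [hcmp, h15]
      -- the v-excess estimate
      have hEv : ∀ t, t ∈ Set.Icc T₀ T₁ → ∀ x, P x →
          max (v t x - ψ t) 0 ≤ C₆ * M * h := by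
        intro t ht x hx
        have hRHS0 : 0 ≤ C₆ * M * h := mul_nonneg (mul_nonneg hC60 hM0) hh.le
        rcases le_or_gt (v t x) (ψ t) with hle | hgt
        · exact max_le (by linarith only [hle, hRHS0]) hRHS0
        have hT₀t : T₀ < t := by
          rcases lt_or_ge T₀ t with hc | hc
          · exact hc
          · exact absurd (hGT₀ t ⟨(hwind t ht).1, hc⟩ x hx).2 (not_le.mpr hgt)
        have hψcont : Continuous ψ := by
          rw [hψdef]
          exact continuous_const.mul (Real.continuous_exp.comp (continuous_const.mul continuous_id))
        have hsub : Set.Icc T₀ t ⊆ Set.Ici (0:ℝ) := fun s hs => le_trans hT₀0 hs.1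
        have hgcont : ContinuousOn (fun s => v s x - ψ s) (Set.Icc T₀ t) :=
          ((hcontv x hx.1).mono hsub).sub hψcont.continuousOn
        have hgT₀ : v T₀ x - ψ T₀ ≤ 0 :=
          sub_nonpos.mpr (hGT₀ T₀ ⟨hT₀0, le_refl _⟩ x hx).2
        obtain ⟨τ, hτmem, hτeq0, hτup⟩ :=
          last_crossing (g := fun s => v s x - ψ s) hT₀t hgcont hgT₀
            (show (0:ℝ) < v t x - ψ t by linarith only [hgt])
        have hτeq : v τ x - ψ τ = 0 := hτeq0
        have hτ0 : 0 ≤ τ := le_trans hT₀0 hτmem.1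
        have hsub2 : Set.Icc τ t ⊆ Set.Ici (0:ℝ) := fun s hs => le_trans hτ0 hs.1
        have hDeriv : ∀ s ∈ Set.Ico τ t, HasDerivWithinAt (fun r => v r x - ψ r)
            ((d₂ * GammaOp Ω γ₂ (v s) x + u s x * (v s x) ^ 2 - (f + κ) * v s x)
              - (-ε * ψ s)) (Set.Ici s) s := by
          intro s hs
          have hs0 : (0:ℝ) ≤ s := le_trans hτ0 hs.1
          exact (((hode x hx.1 s hs0).2).mono (Set.Ici_subset_Ici.mpr hs0)).sub
            ((hψderiv s).hasDerivWithinAt)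
        have hDbd : ∀ s ∈ Set.Ico τ t,
            (d₂ * GammaOp Ω γ₂ (v s) x + u s x * (v s x) ^ 2 - (f + κ) * v s x)
              - (-ε * ψ s) ≤ C₆ * M := by
          intro s hs
          have hs0 : (0:ℝ) ≤ s := le_trans hτ0 hs.1
          have hswin : s ∈ Set.Icc T₀ T₁ :=
            ⟨le_trans hτmem.1 hs.1, le_trans hs.2.le ht.2⟩
          have hsψ : ψ s ≤ v s x := by
            rcases eq_or_lt_of_le hs.1 with he | hlt2
            · have := hτeq; rw [he] at this; linarith
            · have h16 : (0:ℝ) < v s x - ψ s := hτup s ⟨hlt2, hs.2.le⟩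
              linarith
          have hu0' : 0 ≤ u s x := hunn x hx s hs0
          have hv0' : 0 ≤ v s x := hvnn x hx s hs0
          have huub : u s x ≤ φ + M := hbu s hswin x hx
          have hvub : v s x ≤ ψ s + M := hbv s hswin x hx
          have hψub : ψ s ≤ N + η := hψmono s hs0
          have hG := gammaOp_le hγ₂ (hmem s hs0).2 hx.1 (haev s hswin)
          have hc2 : (∫ y in Ω, γ₂ x y) ≤ γinf := (hγ₂.2.2 x hx.1).2.2.2
          have hc2' : 0 ≤ ∫ y in Ω, γ₂ x y := gamma_c_nonneg hγ₂
          have h8 : (∫ y in Ω, γ₂ x y) * (ψ s + M - v s x) ≤ (∫ y in Ω, γ₂ x y) * M :=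
            mul_le_mul_of_nonneg_left (by linarith) hc2'
          have h9 : (∫ y in Ω, γ₂ x y) * M ≤ γinf * M := mul_le_mul_of_nonneg_right hc2 hM0
          have h10 : d₂ * GammaOp Ω γ₂ (v s) x ≤ d₂ * (γinf * M) :=
            mul_le_mul_of_nonneg_left (le_trans hG (le_trans h8 h9)) hd₂.le
          -- product bound
          have m1 : u s x * v s x ≤ (φ + M) * ((N + η) + M) :=
            mul_le_mul huub (by linarith) hv0' (by linarith)
          have m3 : M * (φ + (N + η) + M) ≤ M * C₅ :=
            mul_le_mul_of_nonneg_left (by rw [hC5def]; linarith [hMC0]) hM0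
          have e2 : u s x * v s x ≤ φ * (N + η) + C₅ * M := by linarith only [m1, m3]
          have q1 : u s x * v s x - (f + κ) ≤ -ε - ρ + C₅ * M := by
            linarith only [e2, hkey]
          have q2 : v s x * (u s x * v s x - (f + κ)) ≤ v s x * (-ε - ρ + C₅ * M) :=
            mul_le_mul_of_nonneg_left q1 hv0'
          have q4 : ε * ψ s ≤ ε * v s x := mul_le_mul_of_nonneg_left hsψ hε.le
          have q5 : 0 ≤ ρ * v s x := mul_nonneg hρ.le hv0'
          have q6 : v s x * (C₅ * M) ≤ ((N + η) + C0) * (C₅ * M) :=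
            mul_le_mul_of_nonneg_right (by linarith) (mul_nonneg hC50 hM0)
          have hfinal : u s x * (v s x) ^ 2 - (f + κ) * v s x + ε * ψ s
              ≤ ((N + η) + C0) * C₅ * M := by linarith only [q2, q4, q5, q6]
          have hC6M : C₆ * M = d₂ * (γinf * M) + ((N + η) + C0) * C₅ * M := by
            rw [hC6def]; ring
          linarith only [h10, hfinal, hC6M]
        have hgcont2 : ContinuousOn (fun s => v s x - ψ s) (Set.Icc τ t) :=
          ((hcontv x hx.1).mono hsub2).sub hψcont.continuousOn
        have hcmp0 := cmp_aux hgcont2 hDeriv hDbd t ⟨hτmem.2.le, le_refl _⟩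
        have hcmp : v t x - ψ t ≤ (v τ x - ψ τ) + C₆ * M * (t - τ) := hcmp0
        have htτ : t - τ ≤ h := by
          have h13 : T₀ ≤ τ := hτmem.1
          have h14 : t ≤ T₁ := ht.2
          linarith only [h13, h14, hT₁h]
        have hMM0 : 0 ≤ C₆ * M := mul_nonneg hC60 hM0
        have h15 := mul_le_mul_of_nonneg_left htτ hMM0
        refine max_le ?_ hRHS0
        rw [hτeq] at hcmp
        linarith only [hcmp, h15]
      -- combining: the excess is zero
      have hMh0 : 0 ≤ M * h := mul_nonneg hM0 hh.le
      have hEall : ∀ z ∈ E, z ≤ C₇ * (M * h) := by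
        intro z hz
        rcases Set.mem_insert_iff.mp hz with rfl | hz2
        · exact mul_nonneg hC70.le hMh0
        · obtain ⟨t, ht, x, hx, hz3⟩ := hz2
          have hc7u : d₁ * γinf ≤ C₇ := by rw [hC7def]; linarith
          have hc7v : C₆ ≤ C₇ := by rw [hC7def]; linarith
          rcases hz3 with rfl | rfl
          · have h2 := mul_le_mul_of_nonneg_right hc7u hMh0
            linarith only [hEu t ht x hx, h2]
          · have h2 := mul_le_mul_of_nonneg_right hc7v hMh0
            linarith only [hEv t ht x hx, h2]
      have hMzero : M = 0 := by
        have h1 : M ≤ C₇ * (M * h) := by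
          have h0 : sSup E ≤ C₇ * (M * h) := csSup_le hEne hEall
          rw [← hMdef] at h0; exact h0
        have h2 := mul_le_mul_of_nonneg_right hC7h hM0
        have h3 : C₇ * (M * h) ≤ (1 / 2) * M := by linarith only [h2]
        have h4 : M ≤ 0 := by linarith only [h1, h3]
        exact le_antisymm h4 hM0
      intro t ht x hx
      rcases le_or_gt t T₀ with hc | hc
      · exact hGT₀ t ⟨ht.1, hc⟩ x hx
      · have h4u := hbu t ⟨hc.le, ht.2⟩ x hx
        have h4v := hbv t ⟨hc.le, ht.2⟩ x hx
        rw [hMzero] at h4u h4v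
        exact ⟨by linarith only [h4u], by linarith only [h4v]⟩
    -- iterate the step
    have hind : ∀ k : ℕ, ∀ t, t ∈ Set.Icc (0:ℝ) (min ((k:ℝ) * h) (Q:ℝ)) → ∀ x, P x →
        u t x ≤ φ ∧ v t x ≤ ψ t := by
      intro k
      induction k with
      | zero =>
        intro t ht x hx
        refine hGood0 t ?_ x hx
        have h0 : min (((0:ℕ):ℝ) * h) (Q:ℝ) = 0 := by
          push_cast
          rw [zero_mul]
          exact min_eq_left hQ0
        rw [h0] at ht
        exact ht
      | succ k ih =>
        have hkh0 : (0:ℝ) ≤ (k:ℝ) * h := mul_nonneg (Nat.cast_nonneg k) hh.le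
        have h1 := hstep (min ((k:ℝ) * h) (Q:ℝ)) (le_min hkh0 hQ0) (min_le_right _ _) ih
        intro t ht x hx
        refine h1 t ⟨ht.1, le_trans ht.2 ?_⟩ x hx
        rcases le_total ((k:ℝ) * h) ((Q:ℝ)) with hc | hc
        · rw [min_eq_left hc]
          refine min_le_min (le_of_eq ?_) (le_refl _)
          push_cast
          ring
        · rw [min_eq_right hc]
          rw [min_eq_right (by linarith [hh.le] : (Q:ℝ) ≤ (Q:ℝ) + h)]
          exact min_le_right _ _
    -- conclusion
    obtain ⟨k, hk⟩ := exists_nat_gt ((Q:ℝ) / h)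
    have hQk : (Q:ℝ) ≤ (k:ℝ) * h := by
      rw [div_lt_iff₀ hh] at hk
      linarith
    have hvT : ∀ᵐ x ∂(volume.restrict Ω), |v T x| ≤ ψ T := by
      filter_upwards [hPae] with x hx
      rw [abs_of_nonneg (hvnn x hx T hT)]
      exact (hind k T ⟨hT, le_min (le_trans hTQ hQk) hTQ⟩ x hx).2
    calc supN Ω (v T) ≤ ψ T := supN_le_of_ae (hψpos T).le hvT
      _ = (N + η) * Real.exp (-ε * T) := by simp only [hψdef]
  -- conclude from main
  have hη0pos : 0 < min 1 (ρ / (N + δ + 2)) := lt_min one_pos (div_pos hρ (by linarith))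
  have hexp0 : 0 < Real.exp (-ε * T) := Real.exp_pos _
  refine le_of_forall_pos_le_add ?_
  intro c hc
  set η := min (min 1 (ρ / (N + δ + 2))) (c / Real.exp (-ε * T)) with hη
  have hηpos : 0 < η := lt_min hη0pos (div_pos hc hexp0)
  have h1 := main η hηpos (min_le_left _ _)
  have h2 : η * Real.exp (-ε * T) ≤ c := by
    have h3 : η ≤ c / Real.exp (-ε * T) := min_le_right _ _
    calc η * Real.exp (-ε * T) ≤ (c / Real.exp (-ε * T)) * Real.exp (-ε * T) :=
          mul_le_mul_of_nonneg_right h3 hexp0.le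
      _ = c := by field_simp
  calc supN Ω (v T) ≤ (N + η) * Real.exp (-ε * T) := h1
    _ = Real.exp (-ε * T) * N + η * Real.exp (-ε * T) := by ring
    _ ≤ Real.exp (-ε * T) * N + c := by linarith only [h2]

end
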